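/- For each integer k ≥ 2, define ζ : (−1, 1) → ℝ by the power series ζ(x) = Σ_{n=0}^{∞} [ ((k+1)/2)_n · (k/2)_n / ( (k + 1/2)_n · n! ) ] · (−x²)^n, where (a)_n = a(a+1)⋯(a+n−1) denotes the rising factorial (Pochhammer symbol) with (a)_0 = 1. Then this series converges for every x with |x| < 1, ζ is analytic on (−1, 1) with ζ(0) = 1, and ζ satisfies the ordinary differential equation x(1 + x²)ζ″(x) + 2(k + (k+1)x²)ζ′(x) + k(k+1)·x·ζ(x) = 0 for all x ∈ (−1, 1). -/

import Mathlib

noncomputable section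

/-- The coefficient ((k+1)/2)_n (k/2)_n / ((k+1/2)_n n!) of the hypergeometric series
₂F₁((k+1)/2, k/2; k+1/2; ·), written with rising factorials (Pochhammer symbols). -/
def hgCoeff (k n : ℕ) : ℝ :=
  ((ascPochhammer ℝ n).eval (((k : ℝ) + 1) / 2) * (ascPochhammer ℝ n).eval ((k : ℝ) / 2))
    / ((ascPochhammer ℝ n).eval ((k : ℝ) + 1 / 2) * (n.factorial : ℝ))

/-- ζ(x) = Σ_{n=0}^∞ [((k+1)/2)_n (k/2)_n / ((k+1/2)_n n!)] (−x²)^n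
   = ₂F₁((k+1)/2, k/2; k+1/2; −x²). -/
def zetaHG (k : ℕ) : ℝ → ℝ := fun x => ∑' n : ℕ, hgCoeff k n * (-(x ^ 2)) ^ n

namespace ZetaHGAux

open Polynomial

lemma asc_pos {x : ℝ} (hx : 0 < x) (n : ℕ) : 0 < (ascPochhammer ℝ n).eval x := by
  induction n with
  | zero => simp
  | succ m ih =>
    rw [ascPochhammer_succ_eval]
    exact mul_pos ih (by positivity)

lemma asc_mono {x y : ℝ} (hx : 0 < x) (hxy : x ≤ y) (n : ℕ) :
    (ascPochhammer ℝ n).eval x ≤ (ascPochhammer ℝ n).eval y := by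
  induction n with
  | zero => simp
  | succ m ih =>
    rw [ascPochhammer_succ_eval, ascPochhammer_succ_eval]
    have h1 := asc_pos hx m
    have h2 := asc_pos (lt_of_lt_of_le hx hxy) m
    have hm : (0:ℝ) ≤ m := Nat.cast_nonneg m
    apply mul_le_mul ih (by linarith) (by linarith) (le_of_lt h2)

lemma hgCoeff_pos {k : ℕ} (hk : 2 ≤ k) (n : ℕ) : 0 < hgCoeff k n := by
  have hk' : (2:ℝ) ≤ k := by exact_mod_cast hk
  unfold hgCoeff
  have h1 := asc_pos (x := ((k:ℝ)+1)/2) (by linarith) n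
  have h2 := asc_pos (x := (k:ℝ)/2) (by linarith) n
  have h3 := asc_pos (x := (k:ℝ)+1/2) (by linarith) n
  have h4 : (0:ℝ) < n.factorial := by exact_mod_cast n.factorial_pos
  positivity

lemma aux_pow (j : ℕ) (n : ℕ) : ((n:ℝ)+1)^j * ((n:ℝ)+1+j) ≤ ((n:ℝ)+2)^j * ((n:ℝ)+1) := by
  induction j with
  | zero => simp
  | succ m ih =>
    have hle : ((n:ℝ)+1)^m ≤ ((n:ℝ)+2)^m := by
      apply pow_le_pow_left₀ (by positivity) (by linarith)
    have hA : (0:ℝ) ≤ (n:ℝ)+1 := by positivity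
    push_cast
    calc ((n:ℝ)+1)^(m+1) * ((n:ℝ)+1+((m:ℝ)+1))
        = ((n:ℝ)+1) * (((n:ℝ)+1)^m * ((n:ℝ)+1+(m:ℝ))) + ((n:ℝ)+1) * ((n:ℝ)+1)^m := by
          ring
      _ ≤ ((n:ℝ)+1) * (((n:ℝ)+2)^m * ((n:ℝ)+1)) + ((n:ℝ)+1) * ((n:ℝ)+2)^m := by gcongr
      _ = ((n:ℝ)+2)^(m+1) * ((n:ℝ)+1) := by ring

lemma asc_half_le (k : ℕ) (hk : 2 ≤ k) (n : ℕ) :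
    (ascPochhammer ℝ n).eval ((k:ℝ)/2) ≤ (n.factorial : ℝ) * ((n:ℝ)+1)^k := by
  have hk' : (2:ℝ) ≤ k := by exact_mod_cast hk
  induction n with
  | zero => simp
  | succ m ih =>
    rw [ascPochhammer_succ_eval]
    have hfac : (0:ℝ) < m.factorial := by exact_mod_cast m.factorial_pos
    have h1 : (ascPochhammer ℝ m).eval ((k:ℝ)/2) * ((k:ℝ)/2 + m)
        ≤ ((m.factorial : ℝ) * ((m:ℝ)+1)^k) * ((k:ℝ)/2 + m) := by
      apply mul_le_mul_of_nonneg_right ih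
      have : (0:ℝ) ≤ m := Nat.cast_nonneg m
      linarith
    refine h1.trans ?_
    have h2 : ((m:ℝ)+1)^k * ((k:ℝ)/2 + m) ≤ ((m:ℝ)+1)^k * ((m:ℝ)+1+k) := by
      apply mul_le_mul_of_nonneg_left (by linarith) (by positivity)
    have h3 := aux_pow k m
    have h4 : ((m:ℝ)+1)^k * ((k:ℝ)/2 + m) ≤ ((m:ℝ)+2)^k * ((m:ℝ)+1) := h2.trans h3
    have : ((m+1).factorial : ℝ) = ((m:ℝ)+1) * m.factorial := by
      push_cast [Nat.factorial_succ]; ring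
    rw [this]
    push_cast
    have e : ((m:ℝ)+1+1) = ((m:ℝ)+2) := by ring
    rw [e]
    nlinarith [mul_le_mul_of_nonneg_left h4 hfac.le]

lemma hgCoeff_le {k : ℕ} (hk : 2 ≤ k) (n : ℕ) : hgCoeff k n ≤ ((n:ℝ)+1)^k := by
  have hk' : (2:ℝ) ≤ k := by exact_mod_cast hk
  have hA := asc_pos (x := ((k:ℝ)+1)/2) (by linarith) n
  have hB := asc_pos (x := (k:ℝ)/2) (by linarith) n
  have hC := asc_pos (x := (k:ℝ)+1/2) (by linarith) n
  have hfac : (0:ℝ) < n.factorial := by exact_mod_cast n.factorial_pos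
  have hAC : (ascPochhammer ℝ n).eval (((k:ℝ)+1)/2) ≤ (ascPochhammer ℝ n).eval ((k:ℝ)+1/2) :=
    asc_mono (by linarith) (by linarith) n
  have step1 : hgCoeff k n ≤ (ascPochhammer ℝ n).eval ((k:ℝ)/2) / (n.factorial : ℝ) := by
    unfold hgCoeff
    rw [div_le_div_iff₀ (by positivity) hfac]
    calc (ascPochhammer ℝ n).eval (((k:ℝ)+1)/2) * (ascPochhammer ℝ n).eval ((k:ℝ)/2) * (n.factorial:ℝ)
        ≤ (ascPochhammer ℝ n).eval ((k:ℝ)+1/2) * (ascPochhammer ℝ n).eval ((k:ℝ)/2) * (n.factorial:ℝ) := by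
          apply mul_le_mul_of_nonneg_right (mul_le_mul_of_nonneg_right hAC (le_of_lt hB)) (le_of_lt hfac)
      _ = (ascPochhammer ℝ n).eval ((k:ℝ)/2) * ((ascPochhammer ℝ n).eval ((k:ℝ)+1/2) * (n.factorial:ℝ)) := by ring
  refine step1.trans ?_
  rw [div_le_iff₀ hfac]
  have := asc_half_le k hk n
  linarith

lemma summable_aux (j : ℕ) {r : ℝ} (hr : |r| < 1) :
    Summable (fun n : ℕ => ((n:ℝ)+1)^j * r^n) := by
  apply Summable.of_norm
  have hs1 : Summable (fun n : ℕ => (2:ℝ)^j * ((n:ℝ)^j * |r|^n)) :=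
    (summable_pow_mul_geometric_of_norm_lt_one j (r := |r|) (by rwa [Real.norm_eq_abs, abs_abs])).mul_left _
  have hs2 : Summable (fun n : ℕ => (2:ℝ)^j * |r|^n) :=
    (summable_geometric_of_lt_one (abs_nonneg r) hr).mul_left _
  apply Summable.of_nonneg_of_le (fun n => norm_nonneg _) (fun n => ?_) (hs1.add hs2)
  rw [Real.norm_eq_abs, abs_mul, abs_pow, abs_pow]
  have hb : |(n:ℝ)+1|^j ≤ (2:ℝ)^j * ((n:ℝ)^j + 1) := by
    rw [abs_of_nonneg (by positivity : (0:ℝ) ≤ (n:ℝ)+1)]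
    rcases Nat.eq_zero_or_pos n with h0 | h1
    · subst h0
      have h2 : (1:ℝ) ≤ 2^j := one_le_pow₀ (by norm_num)
      have h3 : (0:ℝ) ≤ ((0:ℕ):ℝ)^j := by positivity
      push_cast at h3 ⊢
      have e : ((0:ℝ)+1)^j = 1 := by norm_num
      nlinarith
    · have hn1 : (1:ℝ) ≤ (n:ℝ) := by exact_mod_cast h1
      calc ((n:ℝ)+1)^j ≤ (2*(n:ℝ))^j := by
            apply pow_le_pow_left₀ (by positivity) (by linarith)
        _ = 2^j * (n:ℝ)^j := by rw [mul_pow]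
        _ ≤ 2^j * ((n:ℝ)^j + 1) := by nlinarith [pow_nonneg (by norm_num : (0:ℝ) ≤ 2) j]
  calc |(n:ℝ)+1|^j * |r|^n ≤ (2^j * ((n:ℝ)^j + 1)) * |r|^n := by
        apply mul_le_mul_of_nonneg_right hb (by positivity)
    _ = 2^j * ((n:ℝ)^j * |r|^n) + 2^j * |r|^n := by ring

lemma hg_rec {k : ℕ} (hk : 2 ≤ k) (n : ℕ) :
    hgCoeff k (n+1) * ((2*(n:ℝ)+2) * (2*(n:ℝ)+2*(k:ℝ)+1))
      = hgCoeff k n * ((2*(n:ℝ)+(k:ℝ)) * (2*(n:ℝ)+(k:ℝ)+1)) := by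
  have hk' : (2:ℝ) ≤ k := by exact_mod_cast hk
  have hC := asc_pos (x := (k:ℝ)+1/2) (by linarith) n
  have hfac : (0:ℝ) < n.factorial := by exact_mod_cast n.factorial_pos
  have hCk : (k:ℝ) + 1/2 + n ≠ 0 := by positivity
  have hfs : ((n+1).factorial : ℝ) = ((n:ℝ)+1) * n.factorial := by
    push_cast [Nat.factorial_succ]; ring
  have hn1 : ((n:ℝ)+1) ≠ 0 := by positivity
  unfold hgCoeff
  rw [ascPochhammer_succ_eval, ascPochhammer_succ_eval, ascPochhammer_succ_eval, hfs]
  set A := (ascPochhammer ℝ n).eval (((k:ℝ)+1)/2) with hA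
  set B := (ascPochhammer ℝ n).eval ((k:ℝ)/2) with hB
  set C := (ascPochhammer ℝ n).eval ((k:ℝ)+1/2) with hCdef
  field_simp
  ring

/-- signed coefficient -/
def zc (k n : ℕ) : ℝ := (-1)^n * hgCoeff k n
/-- the n-th term of the series -/
def zf (k n : ℕ) (x : ℝ) : ℝ := zc k n * x^(2*n)
/-- first derivative of the n-th term -/
def zd1 (k n : ℕ) (x : ℝ) : ℝ := zc k n * (((2*n : ℕ) : ℝ) * x^(2*n - 1))
/-- second derivative of the n-th term -/
def zd2 (k n : ℕ) (x : ℝ) : ℝ :=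
  zc k n * ((2*n : ℕ) : ℝ) * (((2*n - 1 : ℕ) : ℝ) * x^(2*n - 1 - 1))

lemma hasDerivAt_zf (k n : ℕ) (x : ℝ) : HasDerivAt (zf k n) (zd1 k n x) x := by
  show HasDerivAt (fun y => zc k n * y^(2*n)) (zd1 k n x) x
  simpa [zf, zd1] using (hasDerivAt_pow (2*n) x).const_mul (zc k n)

lemma hasDerivAt_zd1 (k n : ℕ) (x : ℝ) : HasDerivAt (zd1 k n) (zd2 k n x) x := by
  have h := (hasDerivAt_pow (2*n - 1) x).const_mul (zc k n * ((2*n : ℕ) : ℝ))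
  have e : zd1 k n = fun y => (zc k n * ((2*n : ℕ) : ℝ)) * y^(2*n-1) := by
    funext y; simp [zd1]; ring
  rw [e]
  simpa [zd2, mul_assoc] using h

lemma key {k : ℕ} (hk : 2 ≤ k) (x : ℝ) (n : ℕ) :
    (x * zd2 k (n+1) x + 2*(k:ℝ) * zd1 k (n+1) x)
      + (x^2*(x * zd2 k n x) + 2*((k:ℝ)+1)*x^2 * zd1 k n x
          + (k:ℝ)*((k:ℝ)+1)*x * zf k n x) = 0 := by
  rcases n with _ | m
  · have h0 := hg_rec hk 0
    simp only [zd1, zd2, zf, zc]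
    norm_num
    linear_combination (-x) * h0
  · have e1 : 2*(m+1+1) - 1 = 2*m+3 := by omega
    have e2 : 2*(m+1+1) - 1 - 1 = 2*m+2 := by omega
    have e3 : 2*(m+1) - 1 = 2*m+1 := by omega
    have e4 : 2*(m+1) - 1 - 1 = 2*m := by omega
    have hrec' := hg_rec hk (m+1)
    simp only [zd1, zd2, zf, zc, e1, e2, e3, e4]
    push_cast
    push_cast at hrec'
    linear_combination ((-1)^m * x^(2*m+3)) * hrec'

lemma zc_abs {k : ℕ} (hk : 2 ≤ k) (n : ℕ) : |zc k n| = hgCoeff k n := by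
  rw [zc, abs_mul, abs_pow, abs_neg, abs_one, one_pow, one_mul,
    abs_of_pos (hgCoeff_pos hk n)]

lemma term_eq (k n : ℕ) (x : ℝ) : hgCoeff k n * (-(x^2))^n = zf k n x := by
  rw [zf, zc, neg_pow, pow_mul]; ring

lemma zeta_eq (k : ℕ) : zetaHG k = fun x => ∑' n : ℕ, zf k n x := by
  funext x
  exact tsum_congr fun n => term_eq k n x

lemma summable_zf {k : ℕ} (hk : 2 ≤ k) {x : ℝ} (hx : |x| < 1) :
    Summable (fun n : ℕ => zf k n x) := by
  have hx2 : |x^2| < 1 := by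
    rw [abs_pow]
    exact pow_lt_one₀ (abs_nonneg x) hx (by norm_num)
  apply Summable.of_norm
  apply Summable.of_nonneg_of_le (fun n => norm_nonneg _) (fun n => ?_) (summable_aux k hx2)
  rw [Real.norm_eq_abs, zf, abs_mul, zc_abs hk, pow_mul, abs_pow]
  have h1 : hgCoeff k n ≤ ((n:ℝ)+1)^k := hgCoeff_le hk n
  have h2 : |x^2|^n ≤ (x^2)^n := le_of_eq (by rw [abs_of_nonneg (by positivity)])
  have h3 : (0:ℝ) ≤ |x^2|^n := by positivity
  nlinarith [hgCoeff_pos hk n, pow_nonneg (by positivity : (0:ℝ) ≤ (n:ℝ)+1) k]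

lemma bound_zd1 {k : ℕ} (hk : 2 ≤ k) {r : ℝ} (hr0 : 0 < r) (n : ℕ) {y : ℝ} (hy : |y| ≤ r) :
    |zd1 k n y| ≤ 2 * (((n:ℝ)+1)^(k+1) * (r^2)^n) / r := by
  rcases n with _ | m
  · simp [zd1]
    positivity
  · have e3 : 2*(m+1) - 1 = 2*m+1 := by omega
    rw [zd1, e3, abs_mul, abs_mul, zc_abs hk, abs_pow]
    have h1 : hgCoeff k (m+1) ≤ ((m:ℝ)+1+1)^k := by
      have := hgCoeff_le hk (m+1)
      push_cast at this
      linarith [this]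
    have h2 : |((2*(m+1) : ℕ) : ℝ)| ≤ 2*((m:ℝ)+1+1) := by
      rw [abs_of_nonneg (by positivity)]
      push_cast; linarith
    have h3 : |y|^(2*m+1) ≤ r^(2*m+1) := pow_le_pow_left₀ (abs_nonneg y) hy _
    have hgoal : hgCoeff k (m+1) * (|((2*(m+1) : ℕ) : ℝ)| * |y|^(2*m+1))
        ≤ ((m:ℝ)+1+1)^k * (2*((m:ℝ)+1+1) * r^(2*m+1)) := by
      apply mul_le_mul h1 _ (by positivity) (by positivity)
      apply mul_le_mul h2 h3 (by positivity) (by positivity)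
    refine hgoal.trans (le_of_eq ?_)
    rw [eq_div_iff hr0.ne', ← pow_mul]
    push_cast
    ring

lemma bound_zd2 {k : ℕ} (hk : 2 ≤ k) {r : ℝ} (hr0 : 0 < r) (n : ℕ) {y : ℝ} (hy : |y| ≤ r) :
    |zd2 k n y| ≤ 4 * (((n:ℝ)+1)^(k+2) * (r^2)^n) / (r^2) := by
  rcases n with _ | m
  · simp [zd2]
    positivity
  · have e4 : 2*(m+1) - 1 - 1 = 2*m := by omega
    have e3 : 2*(m+1) - 1 = 2*m+1 := by omega
    rw [zd2, e4, e3, abs_mul, abs_mul, abs_mul, zc_abs hk, abs_pow]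
    have h1 : hgCoeff k (m+1) ≤ ((m:ℝ)+1+1)^k := by
      have := hgCoeff_le hk (m+1)
      push_cast at this
      linarith [this]
    have h2 : |((2*(m+1) : ℕ) : ℝ)| ≤ 2*((m:ℝ)+1+1) := by
      rw [abs_of_nonneg (by positivity)]; push_cast; linarith
    have h2' : |((2*m+1 : ℕ) : ℝ)| ≤ 2*((m:ℝ)+1+1) := by
      rw [abs_of_nonneg (by positivity)]; push_cast; linarith
    have h3 : |y|^(2*m) ≤ r^(2*m) := pow_le_pow_left₀ (abs_nonneg y) hy _
    have hgoal : hgCoeff k (m+1) * |((2*(m+1) : ℕ) : ℝ)| * (|((2*m+1 : ℕ) : ℝ)| * |y|^(2*m))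
        ≤ ((m:ℝ)+1+1)^k * (2*((m:ℝ)+1+1)) * ((2*((m:ℝ)+1+1)) * r^(2*m)) := by
      apply mul_le_mul (mul_le_mul h1 h2 (by positivity) (by positivity))
        (mul_le_mul h2' h3 (by positivity) (by positivity)) (by positivity) (by positivity)
    refine hgoal.trans (le_of_eq ?_)
    rw [eq_div_iff (by positivity : (r:ℝ)^2 ≠ 0), ← pow_mul]
    push_cast
    ring

lemma summable_u {j : ℕ} {r c : ℝ} {s : ℝ} (hr : |r^2| < 1) :
    Summable (fun n : ℕ => c * (((n:ℝ)+1)^j * (r^2)^n) / s) :=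
  ((summable_aux j hr).mul_left c).div_const s

end ZetaHGAux

open ZetaHGAux

def zca (k : ℕ) : ℕ → ℝ := fun m => if m % 2 = 0 then zc k (m/2) else 0

lemma zca_abs_le {k : ℕ} (hk : 2 ≤ k) (m : ℕ) : |zca k m| ≤ ((m:ℝ)+1)^k := by
  rw [zca]
  split_ifs with h
  · rw [zc_abs hk]
    refine (hgCoeff_le hk (m/2)).trans ?_
    apply pow_le_pow_left₀ (by positivity)
    have : ((m/2 : ℕ) : ℝ) ≤ (m : ℝ) := by exact_mod_cast Nat.div_le_self m 2
    linarith
  · simp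
    positivity

lemma sum_eq_zeta {k : ℕ} {y : ℝ} (hy : |y| < 1) :
    (FormalMultilinearSeries.ofScalars ℝ (zca k)).sum y = zetaHG k y := by
  have h1 : (FormalMultilinearSeries.ofScalars ℝ (zca k)).sum y
      = ∑' m : ℕ, zca k m • y^m := FormalMultilinearSeries.ofScalars_sum_eq (zca k) y
  rw [h1, zeta_eq]
  have hinj : Function.Injective (fun n : ℕ => 2*n) := fun a b h => by
    have h' : 2*a = 2*b := h
    omega
  have hsupp : Function.support (fun m : ℕ => zca k m • y^m)
      ⊆ Set.range (fun n : ℕ => 2*n) := by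
    intro m hm
    rcases Nat.even_or_odd m with he | ho
    · refine ⟨m/2, ?_⟩
      have h2 : m % 2 = 0 := Nat.even_iff.1 he
      show 2*(m/2) = m
      omega
    · exfalso
      apply hm
      have : m % 2 = 1 := Nat.odd_iff.1 ho
      simp [zca, this]
  have := hinj.tsum_eq hsupp
  rw [← this]
  apply tsum_congr
  intro n
  have : zca k (2*n) = zc k n := by
    simp [zca, Nat.mul_div_cancel_left n (by norm_num : 0 < 2)]
  simp only [this, smul_eq_mul, zf]

lemma analytic_zeta {k : ℕ} (hk : 2 ≤ k) {x : ℝ} (hx : x ∈ Set.Ioo (-1:ℝ) 1) :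
    AnalyticAt ℝ (zetaHG k) x := by
  have hx1 : |x| < 1 := abs_lt.2 ⟨hx.1, hx.2⟩
  have hrad : 1 ≤ (FormalMultilinearSeries.ofScalars ℝ (zca k)).radius := by
    apply ENNReal.le_of_forall_nnreal_lt
    intro s hs
    apply FormalMultilinearSeries.le_radius_of_summable_norm
    have hs1 : |(s:ℝ)| < 1 := by
      rw [abs_of_nonneg s.coe_nonneg]
      exact_mod_cast ENNReal.coe_lt_one_iff.1 hs
    apply Summable.of_nonneg_of_le (fun n => by positivity) (fun n => ?_) (summable_aux k hs1)
    rw [FormalMultilinearSeries.ofScalars_norm, Real.norm_eq_abs]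
    apply mul_le_mul_of_nonneg_right (zca_abs_le hk n) (by positivity)
  have hball := (FormalMultilinearSeries.ofScalars ℝ (zca k)).hasFPowerSeriesOnBall
    (lt_of_lt_of_le one_pos hrad)
  have hnn : (‖x‖₊ : ENNReal) < 1 := by
    rw [← ENNReal.coe_one, ENNReal.coe_lt_coe, ← NNReal.coe_lt_coe]
    simpa [Real.norm_eq_abs] using hx1
  have hmem : x ∈ Metric.eball (0:ℝ) (FormalMultilinearSeries.ofScalars ℝ (zca k)).radius := by
    rw [Metric.mem_eball, edist_zero_right]
    exact lt_of_lt_of_le hnn hrad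
  have hA : AnalyticAt ℝ (FormalMultilinearSeries.ofScalars ℝ (zca k)).sum x :=
    hball.analyticAt_of_mem hmem
  apply hA.congr
  apply Filter.eventuallyEq_of_mem (Ioo_mem_nhds hx.1 hx.2)
  intro y hy
  exact sum_eq_zeta (abs_lt.2 ⟨hy.1, hy.2⟩)

/-- **The regular solution of the large-|Λ| soliton equation.** For each integer k ≥ 2,
the series defining ζ converges for |x| < 1, ζ is analytic on (−1, 1) with ζ(0) = 1, and
ζ satisfies x(1+x²)ζ″ + 2(k + (k+1)x²)ζ′ + k(k+1)xζ = 0 on (−1, 1). -/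
theorem zetaHG_solves_ODE (k : ℕ) (hk : 2 ≤ k) :
    (∀ x : ℝ, |x| < 1 → Summable fun n : ℕ => hgCoeff k n * (-(x ^ 2)) ^ n) ∧
    (∀ x ∈ Set.Ioo (-1 : ℝ) 1, AnalyticAt ℝ (zetaHG k) x) ∧
    zetaHG k 0 = 1 ∧
    (∀ x ∈ Set.Ioo (-1 : ℝ) 1,
      x * (1 + x ^ 2) * deriv (deriv (zetaHG k)) x
        + 2 * ((k : ℝ) + ((k : ℝ) + 1) * x ^ 2) * deriv (zetaHG k) x
        + (k : ℝ) * ((k : ℝ) + 1) * x * zetaHG k x = 0) := by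
  refine ⟨?_, ?_, ?_, ?_⟩
  · -- summability
    intro x hx
    exact (summable_congr fun n => term_eq k n x).2 (summable_zf hk hx)
  · -- analyticity
    intro x hx
    exact analytic_zeta hk hx
  · -- value at 0
    rw [zetaHG]
    rw [tsum_eq_single 0 (fun n hn => by
      rw [show (-(0:ℝ)^2) = 0 by norm_num, zero_pow hn, mul_zero])]
    norm_num [hgCoeff]
  · -- the ODE
    intro x hx
    have hx1 : |x| < 1 := abs_lt.2 ⟨hx.1, hx.2⟩
    set r : ℝ := (|x|+1)/2 with hrdef
    have habs := abs_nonneg x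
    have hr0 : 0 < r := by rw [hrdef]; linarith
    have hr1 : r < 1 := by rw [hrdef]; linarith
    have hxr : |x| < r := by rw [hrdef]; linarith
    have hr2 : |r^2| < 1 := by
      rw [abs_of_nonneg (by positivity)]
      nlinarith
    have su1 : Summable (fun n : ℕ => 2 * (((n:ℝ)+1)^(k+1) * (r^2)^n) / r) := summable_u hr2
    have su2 : Summable (fun n : ℕ => 4 * (((n:ℝ)+1)^(k+2) * (r^2)^n) / (r^2)) := summable_u hr2
    have hmemr : ∀ y ∈ Metric.ball (0:ℝ) r, |y| ≤ r := fun y hy => by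
      rw [Metric.mem_ball, Real.dist_eq, sub_zero] at hy; exact hy.le
    have hxt : x ∈ Metric.ball (0:ℝ) r := by
      rw [Metric.mem_ball, Real.dist_eq, sub_zero]; exact hxr
    have sf : Summable (fun n : ℕ => zf k n x) := summable_zf hk hx1
    have sd1 : Summable (fun n : ℕ => zd1 k n x) :=
      Summable.of_norm_bounded su1 (fun n => bound_zd1 hk hr0 n hxr.le)
    have sd2 : Summable (fun n : ℕ => zd2 k n x) :=
      Summable.of_norm_bounded su2 (fun n => bound_zd2 hk hr0 n hxr.le)
    -- derivatives of the sum
    have hD1 : ∀ y ∈ Metric.ball (0:ℝ) r,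
        HasDerivAt (fun z => ∑' n : ℕ, zf k n z) (∑' n : ℕ, zd1 k n y) y := fun y hy =>
      hasDerivAt_tsum_of_isPreconnected su1 Metric.isOpen_ball
        (convex_ball (0:ℝ) r).isPreconnected
        (fun n z _ => hasDerivAt_zf k n z)
        (fun n z hz => bound_zd1 hk hr0 n (hmemr z hz)) hxt sf hy
    have hD2 : ∀ y ∈ Metric.ball (0:ℝ) r,
        HasDerivAt (fun z => ∑' n : ℕ, zd1 k n z) (∑' n : ℕ, zd2 k n y) y := fun y hy =>
      hasDerivAt_tsum_of_isPreconnected su2 Metric.isOpen_ball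
        (convex_ball (0:ℝ) r).isPreconnected
        (fun n z _ => hasDerivAt_zd1 k n z)
        (fun n z hz => bound_zd2 hk hr0 n (hmemr z hz)) hxt sd1 hy
    have hzeta1 : ∀ y ∈ Metric.ball (0:ℝ) r,
        HasDerivAt (zetaHG k) (∑' n : ℕ, zd1 k n y) y := by
      rw [zeta_eq]; exact hD1
    have e0 : zetaHG k x = ∑' n : ℕ, zf k n x := by rw [zeta_eq]
    have e1 : deriv (zetaHG k) x = ∑' n : ℕ, zd1 k n x := (hzeta1 x hxt).deriv
    have hEv : deriv (zetaHG k) =ᶠ[nhds x] (fun y => ∑' n : ℕ, zd1 k n y) :=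
      Filter.eventuallyEq_of_mem (Metric.isOpen_ball.mem_nhds hxt)
        (fun y hy => (hzeta1 y hy).deriv)
    have e2 : deriv (deriv (zetaHG k)) x = ∑' n : ℕ, zd2 k n x := by
      rw [hEv.deriv_eq]; exact (hD2 x hxt).deriv
    rw [e0, e1, e2]
    -- combine into a single tsum
    rw [← tsum_mul_left, ← tsum_mul_left, ← tsum_mul_left,
      ← Summable.tsum_add (sd2.mul_left _) (sd1.mul_left _),
      ← Summable.tsum_add ((sd2.mul_left _).add (sd1.mul_left _)) (sf.mul_left _)]
    have sP : Summable (fun n : ℕ => x * zd2 k n x + 2*(k:ℝ) * zd1 k n x) :=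
      (sd2.mul_left x).add (sd1.mul_left (2*(k:ℝ)))
    have sQ : Summable (fun n : ℕ => x^2*(x * zd2 k n x) + 2*((k:ℝ)+1)*x^2 * zd1 k n x
        + (k:ℝ)*((k:ℝ)+1)*x * zf k n x) :=
      (((sd2.mul_left x).mul_left (x^2)).add (sd1.mul_left (2*((k:ℝ)+1)*x^2))).add
        (sf.mul_left ((k:ℝ)*((k:ℝ)+1)*x))
    have split : ∀ n : ℕ, x * (1 + x ^ 2) * zd2 k n x
          + 2 * ((k:ℝ) + ((k:ℝ) + 1) * x ^ 2) * zd1 k n x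
          + (k:ℝ) * ((k:ℝ) + 1) * x * zf k n x
        = (x * zd2 k n x + 2*(k:ℝ) * zd1 k n x)
          + (x^2*(x * zd2 k n x) + 2*((k:ℝ)+1)*x^2 * zd1 k n x
              + (k:ℝ)*((k:ℝ)+1)*x * zf k n x) := fun n => by ring
    rw [tsum_congr split, Summable.tsum_add sP sQ, Summable.tsum_eq_zero_add sP]
    have hP0 : x * zd2 k 0 x + 2*(k:ℝ) * zd1 k 0 x = 0 := by
      simp [zd1, zd2]
    rw [hP0, zero_add]
    have sPs : Summable (fun n : ℕ => x * zd2 k (n+1) x + 2*(k:ℝ) * zd1 k (n+1) x) :=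
      (summable_nat_add_iff 1).2 sP
    rw [← Summable.tsum_add sPs sQ, tsum_congr (key hk x), tsum_zero]
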